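/- Let K be an infinite subset of ℕ. Then there exists an unbounded modulus f : [0,∞) → [0,∞) which is concave on [0,∞), slowly varying, and satisfies d^f(K) = 1. -/

import Mathlib

open Filter Metric Set
open scoped Classical

/-- A modulus: `f : [0,∞) → [0,∞)` with `f x = 0 ↔ x = 0`, subadditive,
increasing, and continuous (all on `[0,∞)`). -/
def IsModulus (f : ℝ → ℝ) : Prop :=
  (∀ x : ℝ, 0 ≤ x → 0 ≤ f x) ∧
  (∀ x : ℝ, 0 ≤ x → (f x = 0 ↔ x = 0)) ∧
  (∀ x y : ℝ, 0 ≤ x → 0 ≤ y → f (x + y) ≤ f x + f y) ∧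
  MonotoneOn f (Set.Ici 0) ∧
  ContinuousOn f (Set.Ici 0)

/-- `f` is unbounded on `[0,∞)`. -/
def IsUnboundedOn (f : ℝ → ℝ) : Prop := ∀ M : ℝ, ∃ x : ℝ, 0 ≤ x ∧ M < f x

/-- The number of elements `k ≤ n` with `k ∈ K`. -/
noncomputable def countLe (K : Set ℕ) (n : ℕ) : ℕ := Nat.card {k : ℕ | k ≤ n ∧ k ∈ K}

/-- `K ⊆ ℕ` has `f`-density `d`: `lim_n f(|{k ≤ n : k ∈ K}|)/f(n) = d`. -/
def HasFDensity (f : ℝ → ℝ) (K : Set ℕ) (d : ℝ) : Prop :=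
  Tendsto (fun n : ℕ => f (countLe K n : ℝ) / f (n : ℝ)) atTop (nhds d)

/-- `K ⊆ ℕ` has natural density `d`: `lim_n |{k ≤ n : k ∈ K}|/n = d`. -/
def HasNatDensity (K : Set ℕ) (d : ℝ) : Prop :=
  Tendsto (fun n : ℕ => (countLe K n : ℝ) / (n : ℝ)) atTop (nhds d)

/-- Wijsman convergence: `d(x, A_k) → d(x, A)` for every `x`. -/
def WijsmanConvTo {X : Type*} [MetricSpace X] (Aseq : ℕ → Set X) (A : Set X) : Prop :=
  ∀ x : X, Tendsto (fun k : ℕ => infDist x (Aseq k)) atTop (nhds (infDist x A))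

/-- Wijsman statistical convergence (with respect to the natural density). -/
def WijsmanStatConvTo {X : Type*} [MetricSpace X] (Aseq : ℕ → Set X) (A : Set X) : Prop :=
  ∀ x : X, ∀ ε : ℝ, 0 < ε →
    HasNatDensity {k : ℕ | ε ≤ |infDist x (Aseq k) - infDist x A|} 0

/-- `f`-Wijsman statistical convergence: `[WS^f]-lim A_k = A`. -/
def FWijsmanStatConvTo (f : ℝ → ℝ) {X : Type*} [MetricSpace X]
    (Aseq : ℕ → Set X) (A : Set X) : Prop :=
  ∀ x : X, ∀ ε : ℝ, 0 < ε →
    HasFDensity f {k : ℕ | ε ≤ |infDist x (Aseq k) - infDist x A|} 0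

/-- Wijsman boundedness: `sup_k d(x, A_k) < ∞` for every `x`. -/
def WijsmanBounded {X : Type*} [MetricSpace X] (Aseq : ℕ → Set X) : Prop :=
  ∀ x : X, ∃ M : ℝ, ∀ k : ℕ, infDist x (Aseq k) ≤ M

/-- Wijsman Cesàro summability to `A`. -/
def WijsmanCesaroTo {X : Type*} [MetricSpace X] (Aseq : ℕ → Set X) (A : Set X) : Prop :=
  ∀ x : X, Tendsto (fun n : ℕ => (∑ k ∈ Finset.range n, infDist x (Aseq k)) / (n : ℝ))
    atTop (nhds (infDist x A))

/-- Wijsman strong Cesàro summability to `A` with respect to a modulus `f`: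
`[Ww^f]-lim A_k = A`. -/
def WijsmanStrongCesaroTo (f : ℝ → ℝ) {X : Type*} [MetricSpace X]
    (Aseq : ℕ → Set X) (A : Set X) : Prop :=
  ∀ x : X, Tendsto
    (fun n : ℕ => (∑ k ∈ Finset.range n, f |infDist x (Aseq k) - infDist x A|) / (n : ℝ))
    atTop (nhds 0)

/-- A slowly varying modulus: `lim_{x→∞} f(ax)/f(x) = 1` for every `a > 0`. -/
def SlowlyVaryingOn (f : ℝ → ℝ) : Prop :=
  ∀ a : ℝ, 0 < a → Tendsto (fun x : ℝ => f (a * x) / f x) atTop (nhds 1)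

namespace Stmt3Aux

variable (M : ℕ → ℕ)

/-- gap -/
noncomputable def g (k : ℕ) : ℝ := (M (k+1) : ℝ) - (M k : ℝ)

/-- linear piece -/
noncomputable def L (k : ℕ) (x : ℝ) : ℝ := (k : ℝ) + (x - (M k : ℝ)) / g M k

/-- the modulus -/
noncomputable def f (x : ℝ) : ℝ := ⨅ k, L M k x

/-- Hypothesis bundle -/
def Good : Prop := M 0 = 0 ∧ ∀ k, M k ^ 2 + 1 ≤ M (k + 1)

variable {M}

lemma Good.lt (h : Good M) (k : ℕ) : M k < M (k+1) :=
  lt_of_lt_of_le (by nlinarith [sq_nonneg (M k), Nat.le_self_pow two_ne_zero (M k)]) (h.2 k)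

lemma Good.mono (h : Good M) : StrictMono M := strictMono_nat_of_lt_succ h.lt

lemma Good.le_self (h : Good M) (k : ℕ) : k ≤ M k := h.mono.le_apply

lemma Good.two_mul (h : Good M) (k : ℕ) : 2 * M k ≤ M (k+1) :=
  le_trans (by nlinarith [sq_nonneg (M k - 1)]) (h.2 k)

lemma Good.g_pos (h : Good M) (k : ℕ) : 0 < g M k := by
  have := h.lt k
  have : (M k : ℝ) < M (k+1) := by exact_mod_cast this
  simp [g]; linarith

lemma Good.one_le_g (h : Good M) (k : ℕ) : 1 ≤ g M k := by
  have := h.lt k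
  have : (M k : ℝ) + 1 ≤ M (k+1) := by exact_mod_cast this
  simp [g]; linarith

lemma Good.M_le_g (h : Good M) (k : ℕ) : (M k : ℝ) ≤ g M k := by
  have := h.two_mul k
  have : 2 * (M k : ℝ) ≤ M (k+1) := by exact_mod_cast this
  simp [g]; linarith

lemma Good.g_mono (h : Good M) : Monotone (g M) := by
  apply monotone_nat_of_le_succ
  intro k
  have h1 := h.two_mul (k+1)
  have h1 : 2 * (M (k+1) : ℝ) ≤ M (k+2) := by exact_mod_cast h1
  have h2 : (0:ℝ) ≤ M k := Nat.cast_nonneg _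
  simp only [g]; linarith

lemma Good.L_lb (h : Good M) (k : ℕ) (x : ℝ) : (k : ℝ) - 1 + min x 0 ≤ L M k x := by
  have hg := h.g_pos k
  have hg1 := h.one_le_g k
  have hM := h.M_le_g k
  have h1 : min x 0 - 1 ≤ (x - M k) / g M k := by
    rw [le_div_iff₀ hg]
    rcases le_or_gt 0 x with hx | hx
    · have : min x 0 = 0 := min_eq_right hx
      rw [this]
      nlinarith
    · have : min x 0 = x := min_eq_left hx.le
      rw [this]
      have hxg : x * g M k ≤ x := by nlinarith
      nlinarith
  simp only [L]; linarith

lemma Good.bddBelow (h : Good M) (x : ℝ) : BddBelow (Set.range fun k => L M k x) := by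
  refine ⟨min x 0 - 1, ?_⟩
  rintro _ ⟨k, rfl⟩
  have := h.L_lb k x
  have : (0:ℝ) ≤ k := Nat.cast_nonneg _
  have := h.L_lb k x
  linarith

lemma Good.f_le_L (h : Good M) (k : ℕ) (x : ℝ) : f M x ≤ L M k x :=
  ciInf_le (h.bddBelow x) k

lemma Good.le_f (h : Good M) {x b : ℝ} (hb : ∀ k, b ≤ L M k x) : b ≤ f M x :=
  le_ciInf hb

lemma Good.f_mono (h : Good M) : Monotone (f M) := by
  intro x y hxy
  apply ciInf_mono (h.bddBelow x)
  intro k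
  simp only [L]
  have := h.g_pos k
  gcongr

lemma Good.f_lip (h : Good M) (x y : ℝ) : f M x ≤ f M y + |x - y| := by
  have key : ∀ k, L M k x ≤ L M k y + |x - y| := by
    intro k
    have hg := h.g_pos k
    have hg1 := h.one_le_g k
    simp only [L]
    have h1 : (x - M k) / g M k - (y - M k) / g M k = (x - y) / g M k := by ring
    have h2 : (x - y) / g M k ≤ |x - y| := by
      rw [div_le_iff₀ hg]
      nlinarith [le_abs_self (x - y), abs_nonneg (x - y)]
    linarith
  have : ∀ k, f M x - |x - y| ≤ L M k y := fun k => by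
    have := h.f_le_L k x
    have := key k
    linarith
  have := le_ciInf this
  simp only [f] at *
  linarith

lemma Good.f_zero (h : Good M) : f M 0 = 0 := by
  apply le_antisymm
  · have := h.f_le_L 0 0
    simp only [L, h.1, g] at this
    simpa [h.1] using this
  · apply h.le_f
    intro k
    have hg := h.g_pos k
    have hM := h.M_le_g k
    have h1 : (0 - (M k : ℝ)) / g M k ≥ -1 := by
      rw [ge_iff_le, le_div_iff₀ hg]
      nlinarith
    cases k with
    | zero => simp [L, h.1]
    | succ n =>
        simp only [L]
        have : (1:ℝ) ≤ (n+1 : ℕ) := by exact_mod_cast Nat.one_le_iff_ne_zero.2 (Nat.succ_ne_zero n)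
        push_cast at this ⊢
        linarith

lemma Good.f_nonneg (h : Good M) {x : ℝ} (hx : 0 ≤ x) : 0 ≤ f M x := by
  have := h.f_mono hx
  rw [h.f_zero] at this
  exact this

lemma Good.f_pos (h : Good M) {x : ℝ} (hx : 0 < x) : 0 < f M x := by
  have hg1 := h.g_pos 1
  have hb : 0 < min (x / g M 1) 1 := lt_min (div_pos hx hg1) one_pos
  refine lt_of_lt_of_le hb (h.le_f ?_)
  intro k
  match k with
  | 0 =>
      have hg0 := h.g_pos 0
      have hgm : g M 0 ≤ g M 1 := h.g_mono (by norm_num)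
      have : x / g M 1 ≤ x / g M 0 := div_le_div_of_nonneg_left hx.le hg0 hgm
      have heq : L M 0 x = x / g M 0 := by simp [L, h.1]
      rw [heq]
      calc min (x / g M 1) 1 ≤ x / g M 1 := min_le_left _ _
        _ ≤ x / g M 0 := this
  | 1 =>
      have hM1 := h.M_le_g 1
      have key : x / g M 1 ≤ L M 1 x := by
        simp only [L]
        have e : (x - (M 1:ℝ)) / g M 1 = x / g M 1 - (M 1:ℝ) / g M 1 := by ring
        have hd : (M 1 : ℝ) / g M 1 ≤ 1 := (div_le_one hg1).2 hM1
        rw [e]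
        push_cast
        linarith
      exact (min_le_left _ _).trans key
  | (n+2) =>
      have hlb := h.L_lb (n+2) x
      have hmin : min x 0 = 0 := min_eq_right hx.le
      rw [hmin] at hlb
      push_cast at hlb
      calc min (x / g M 1) 1 ≤ 1 := min_le_right _ _
        _ ≤ L M (n+2) x := by linarith

lemma Good.f_concave (h : Good M) : ConcaveOn ℝ Set.univ (f M) := by
  refine ⟨convex_univ, ?_⟩
  intro x _ y _ a b ha hb hab
  apply h.le_f
  intro k
  have hg : g M k ≠ 0 := (h.g_pos k).ne'
  have hb' : b = 1 - a := by linarith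
  subst hb'
  have h2 : a * L M k x + (1 - a) * L M k y = L M k (a * x + (1 - a) * y) := by
    simp only [L]
    field_simp
    ring
  simp only [smul_eq_mul]
  rw [← h2]
  have g1 : a * f M x ≤ a * L M k x := mul_le_mul_of_nonneg_left (h.f_le_L k x) ha
  have g2 : (1-a) * f M y ≤ (1-a) * L M k y := mul_le_mul_of_nonneg_left (h.f_le_L k y) hb
  linarith

lemma Good.f_subadd (h : Good M) {x y : ℝ} (hx : 0 ≤ x) (hy : 0 ≤ y) :
    f M (x + y) ≤ f M x + f M y := by
  rcases eq_or_lt_of_le (add_nonneg hx hy) with hs | hs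
  · have hx0 : x = 0 := by linarith
    have hy0 : y = 0 := by linarith
    simp [hx0, hy0, h.f_zero]
  · set s := x + y with hsdef
    have hsne : s ≠ 0 := hs.ne'
    have hax : 0 ≤ x / s := div_nonneg hx hs.le
    have hay : 0 ≤ y / s := div_nonneg hy hs.le
    have habx : x / s + y / s = 1 := by field_simp; linarith
    have haby : y / s + x / s = 1 := by linarith
    have c1 := h.f_concave.2 (mem_univ s) (mem_univ (0:ℝ)) hax hay habx
    have c2 := h.f_concave.2 (mem_univ s) (mem_univ (0:ℝ)) hay hax haby
    simp only [smul_eq_mul, mul_zero, add_zero, h.f_zero] at c1 c2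
    rw [div_mul_cancel₀ x hsne] at c1
    rw [div_mul_cancel₀ y hsne] at c2
    have hsum : x/s * f M s + y/s * f M s = f M s := by
      rw [← add_mul, habx, one_mul]
    linarith

lemma Good.f_ub (h : Good M) (k : ℕ) {x : ℝ} (hx : x ≤ (M (k+1) : ℝ)) :
    f M x ≤ (k : ℝ) + 1 := by
  refine (h.f_le_L k x).trans ?_
  simp only [L]
  have hg := h.g_pos k
  have : (x - (M k : ℝ)) / g M k ≤ 1 := by
    rw [div_le_one hg]
    simp only [g]
    linarith
  linarith

lemma Good.gap (h : Good M) (k : ℕ) : ∀ j, k ≤ j → ((j:ℝ) - k) * g M k ≤ (M j : ℝ) - M k := by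
  intro j hj
  induction j, hj using Nat.le_induction with
  | base => simp
  | succ j hj ih =>
      have h1 : g M k ≤ g M j := h.g_mono hj
      have h2 : (M (j+1) : ℝ) - M j = g M j := by simp [g]
      push_cast
      push_cast at ih
      linarith

lemma Good.f_lbM (h : Good M) (j : ℕ) : (j : ℝ) ≤ f M (M j) := by
  apply h.le_f
  intro k
  rcases lt_trichotomy k j with hkj | rfl | hkj
  · -- k < j
    have := h.gap k j hkj.le
    have hg := h.g_pos k
    simp only [L]
    rw [← sub_nonneg]
    have h1 : ((j:ℝ) - k) ≤ ((M j : ℝ) - M k) / g M k := by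
      rw [le_div_iff₀ hg]; linarith
    linarith
  · simp [L]
  · -- j < k
    have := h.L_lb k (M j)
    have h1 : min ((M j : ℕ) : ℝ) 0 = 0 := min_eq_right (Nat.cast_nonneg _)
    rw [h1] at this
    have h2 : (j : ℝ) + 1 ≤ k := by exact_mod_cast hkj
    linarith

lemma Good.f_tendsto (h : Good M) : Tendsto (f M) atTop atTop := by
  rw [Filter.tendsto_atTop]
  intro b
  rw [eventually_atTop]
  refine ⟨(M ⌈b⌉₊ : ℝ), fun x hx => ?_⟩
  calc b ≤ (⌈b⌉₊ : ℝ) := Nat.le_ceil b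
    _ ≤ f M (M ⌈b⌉₊) := h.f_lbM _
    _ ≤ f M x := h.f_mono hx

lemma Good.floorM (h : Good M) (x : ℝ) (hx : 0 ≤ x) :
    ∃ j, (M j : ℝ) ≤ x ∧ x < (M (j+1) : ℝ) := by
  have hP0 : (fun i => (M i : ℝ) ≤ x) 0 := by simpa [h.1] using hx
  set j := Nat.findGreatest (fun i => (M i : ℝ) ≤ x) ⌈x⌉₊ with hj
  refine ⟨j, Nat.findGreatest_spec (P := fun i => (M i : ℝ) ≤ x) (Nat.zero_le _) hP0, ?_⟩
  by_cases hc : j + 1 ≤ ⌈x⌉₊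
  · have hng := Nat.findGreatest_is_greatest (Nat.lt_succ_self j) hc
    have hng' : ¬ (M (j+1) : ℝ) ≤ x := hng
    exact not_le.mp hng'
  · push_neg at hc
    have h1 : (⌈x⌉₊ : ℝ) < (j + 1 : ℕ) := by exact_mod_cast hc
    have h2 : ((j+1 : ℕ) : ℝ) ≤ M (j+1) := by exact_mod_cast h.le_self (j+1)
    calc x ≤ (⌈x⌉₊ : ℝ) := Nat.le_ceil x
      _ < ((j+1 : ℕ) : ℝ) := h1
      _ ≤ M (j+1) := h2

lemma Good.f_slow_key (h : Good M) {a : ℝ} (ha : 1 ≤ a) {x : ℝ}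
    (hx : (M (⌈a⌉₊ + 1) : ℝ) ≤ x) :
    f M (a * x) ≤ f M x + 2 ∧ 1 ≤ f M x := by
  have hx0 : (0:ℝ) ≤ x := le_trans (Nat.cast_nonneg _) hx
  obtain ⟨j, hj1, hj2⟩ := h.floorM x hx0
  have hjge : ⌈a⌉₊ + 1 ≤ j := by
    by_contra hcon
    push_neg at hcon
    have : M (⌈a⌉₊ + 1) ≥ M (j + 1) := h.mono.monotone hcon
    have : ((M (j+1)):ℝ) ≤ M (⌈a⌉₊+1) := by exact_mod_cast this
    linarith
  have haM : a ≤ (M (j+1) : ℝ) := by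
    calc a ≤ (⌈a⌉₊ : ℝ) := Nat.le_ceil a
      _ ≤ (j : ℝ) := by exact_mod_cast le_trans (Nat.le_succ _) hjge
      _ ≤ (M j : ℝ) := by exact_mod_cast h.le_self j
      _ ≤ (M (j+1) : ℝ) := by exact_mod_cast (h.lt j).le
  have hax : a * x ≤ (M (j+2) : ℝ) := by
    have hsq : (M (j+1) : ℝ) * M (j+1) ≤ M (j+2) := by
      have := h.2 (j+1)
      have : ((M (j+1))^2 : ℝ) + 1 ≤ M (j+2) := by exact_mod_cast this
      nlinarith
    calc a * x ≤ (M (j+1) : ℝ) * M (j+1) := by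
          apply mul_le_mul haM hj2.le hx0 (Nat.cast_nonneg _)
      _ ≤ M (j+2) := hsq
  have h1 : f M (a * x) ≤ (j:ℝ) + 2 := by
    have := h.f_ub (j+1) hax
    push_cast at this ⊢
    linarith
  have h2 : (j : ℝ) ≤ f M x := le_trans (h.f_lbM j) (h.f_mono hj1)
  constructor
  · linarith
  · have : (1:ℝ) ≤ j := by
      have : 1 ≤ j := le_trans (Nat.le_add_left 1 _) hjge
      exact_mod_cast this
    linarith

lemma Good.f_slow (h : Good M) (a : ℝ) (ha : 0 < a) :
    Tendsto (fun x : ℝ => f M (a * x) / f M x) atTop (nhds 1) := by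
  rcases le_or_gt 1 a with h1 | h1
  · have hup : Tendsto (fun x : ℝ => 1 + 2 / f M x) atTop (nhds 1) := by
      have h2 : Tendsto (fun x : ℝ => 2 / f M x) atTop (nhds 0) :=
        Tendsto.div_atTop tendsto_const_nhds h.f_tendsto
      simpa using tendsto_const_nhds.add h2
    apply tendsto_of_tendsto_of_tendsto_of_le_of_le' tendsto_const_nhds hup
    · filter_upwards [eventually_ge_atTop ((M (⌈a⌉₊+1) : ℝ))] with x hx
      obtain ⟨hkey, hfx⟩ := h.f_slow_key h1 hx
      have hx0 : (0:ℝ) ≤ x := le_trans (Nat.cast_nonneg _) hx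
      have hfx0 : (0:ℝ) < f M x := lt_of_lt_of_le one_pos hfx
      have hxa : x ≤ a * x := le_mul_of_one_le_left hx0 h1
      have hm : f M x ≤ f M (a * x) := h.f_mono hxa
      rw [le_div_iff₀ hfx0]; linarith
    · filter_upwards [eventually_ge_atTop ((M (⌈a⌉₊+1) : ℝ))] with x hx
      obtain ⟨hkey, hfx⟩ := h.f_slow_key h1 hx
      have hfx0 : (0:ℝ) < f M x := lt_of_lt_of_le one_pos hfx
      rw [div_le_iff₀ hfx0]
      have he : (1 + 2 / f M x) * f M x = f M x + 2 := by field_simp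
      rw [he]
      exact hkey
  · have hainv : 1 ≤ a⁻¹ := by
      have h2 := mul_inv_cancel₀ ha.ne'
      have h3 : 0 < a⁻¹ := inv_pos.2 ha
      nlinarith
    have hmul : Tendsto (fun x : ℝ => a * x) atTop atTop :=
      Tendsto.const_mul_atTop ha tendsto_id
    have hF : Tendsto (fun x : ℝ => f M (a * x)) atTop atTop := h.f_tendsto.comp hmul
    have hlow : Tendsto (fun x : ℝ => 1 - 2 / (f M (a*x) + 2)) atTop (nhds 1) := by
      have h2 : Tendsto (fun x : ℝ => f M (a*x) + 2) atTop atTop :=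
        tendsto_atTop_add_const_right _ 2 hF
      have h3 : Tendsto (fun x : ℝ => 2 / (f M (a*x) + 2)) atTop (nhds 0) :=
        Tendsto.div_atTop tendsto_const_nhds h2
      simpa using tendsto_const_nhds.sub h3
    have hev : ∀ᶠ x : ℝ in atTop, (M (⌈a⁻¹⌉₊+1) : ℝ) ≤ a * x :=
      hmul.eventually_ge_atTop _
    apply tendsto_of_tendsto_of_tendsto_of_le_of_le' hlow tendsto_const_nhds
    · filter_upwards [hev, eventually_ge_atTop (0:ℝ)] with x hx hx0
      obtain ⟨hkey, hfax⟩ := h.f_slow_key hainv hx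
      rw [inv_mul_cancel_left₀ ha.ne'] at hkey
      have hfax0 : (0:ℝ) < f M (a*x) := lt_of_lt_of_le one_pos hfax
      have hax : a * x ≤ x := by nlinarith
      have hfx : f M (a*x) ≤ f M x := h.f_mono hax
      have hfx0 : (0:ℝ) < f M x := lt_of_lt_of_le one_pos (hfax.trans hfx)
      have he : 1 - 2 / (f M (a*x) + 2) = f M (a*x) / (f M (a*x) + 2) := by
        field_simp; ring
      rw [he]
      exact div_le_div_of_nonneg_left hfax0.le hfx0 hkey
    · filter_upwards [hev, eventually_ge_atTop (0:ℝ)] with x hx hx0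
      obtain ⟨hkey, hfax⟩ := h.f_slow_key hainv hx
      have hax : a * x ≤ x := by nlinarith
      have hfx : f M (a*x) ≤ f M x := h.f_mono hax
      have hfx0 : (0:ℝ) < f M x := lt_of_lt_of_le one_pos (hfax.trans hfx)
      exact (div_le_one hfx0).2 hfx

end Stmt3Aux

lemma countLe_finite (K : Set ℕ) (n : ℕ) : {k : ℕ | k ≤ n ∧ k ∈ K}.Finite :=
  (Set.finite_Iic n).subset (fun k hk => hk.1)

lemma countLe_eq_ncard (K : Set ℕ) (n : ℕ) : countLe K n = {k : ℕ | k ≤ n ∧ k ∈ K}.ncard := by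
  rw [countLe, Nat.card_coe_set_eq]

lemma countLe_mono (K : Set ℕ) : Monotone (countLe K) := by
  intro m n hmn
  rw [countLe_eq_ncard, countLe_eq_ncard]
  exact Set.ncard_le_ncard (fun k hk => ⟨hk.1.trans hmn, hk.2⟩) (countLe_finite K n)

lemma countLe_le (K : Set ℕ) (n : ℕ) : countLe K n ≤ n + 1 := by
  rw [countLe_eq_ncard]
  calc {k : ℕ | k ≤ n ∧ k ∈ K}.ncard ≤ ((Finset.range (n+1) : Finset ℕ) : Set ℕ).ncard :=
        Set.ncard_le_ncard (fun k hk => by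
          simp only [Finset.coe_range, Set.mem_Iio]
          exact Nat.lt_succ_of_le hk.1) (Finset.range (n+1)).finite_toSet
    _ = n + 1 := by rw [Set.ncard_coe_finset, Finset.card_range]

lemma countLe_unbounded {K : Set ℕ} (hK : K.Infinite) : ∀ m : ℕ, ∃ n, m ≤ countLe K n := by
  intro m
  obtain ⟨s, hsub, hcard⟩ := hK.exists_subset_card_eq m
  refine ⟨s.sup id, ?_⟩
  rw [countLe_eq_ncard]
  have hsub2 : (↑s : Set ℕ) ⊆ {k : ℕ | k ≤ s.sup id ∧ k ∈ K} :=
    fun k hk => ⟨Finset.le_sup (f := id) hk, hsub hk⟩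
  calc m = (↑s : Set ℕ).ncard := by rw [Set.ncard_coe_finset, hcard]
    _ ≤ {k : ℕ | k ≤ s.sup id ∧ k ∈ K}.ncard :=
        Set.ncard_le_ncard hsub2 (countLe_finite K (s.sup id))

/-- least `n` with `m ≤ countLe K n` -/
noncomputable def pick (K : Set ℕ) (hcu : ∀ m : ℕ, ∃ n, m ≤ countLe K n) (m : ℕ) : ℕ :=
  @Nat.find (fun n => m ≤ countLe K n) (Classical.decPred _) (hcu m)

lemma pick_spec (K : Set ℕ) (hcu : ∀ m : ℕ, ∃ n, m ≤ countLe K n) (m : ℕ) :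
    m ≤ countLe K (pick K hcu m) :=
  @Nat.find_spec (fun n => m ≤ countLe K n) (Classical.decPred _) (hcu m)

/-- For every infinite `K ⊆ ℕ` there is an unbounded, concave,
slowly varying modulus `f` with `d^f(K) = 1`. -/
theorem stmt3 (K : Set ℕ) (hK : K.Infinite) :
    ∃ f : ℝ → ℝ, IsModulus f ∧ IsUnboundedOn f ∧ ConcaveOn ℝ (Set.Ici 0) f ∧
      SlowlyVaryingOn f ∧ HasFDensity f K 1 := by
  classical
  have hcu : ∀ m : ℕ, ∃ n, m ≤ countLe K n := countLe_unbounded hK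
  let Mf : ℕ → ℕ := fun k => Nat.rec (motive := fun _ => ℕ) 0 (fun _ Mk => max (Mk^2+1) (pick K hcu Mk)) k
  have hM0 : Mf 0 = 0 := rfl
  have hMrec : ∀ k, Mf (k+1) = max (Mf k^2+1) (pick K hcu (Mf k)) := fun k => rfl
  have hG : Stmt3Aux.Good Mf := ⟨hM0, fun k => by rw [hMrec]; exact le_max_left _ _⟩
  have hMc : ∀ k n, Mf (k+1) ≤ n → Mf k ≤ countLe K n := by
    intro k n hn
    have h1 : pick K hcu (Mf k) ≤ n :=
      le_trans (by rw [hMrec]; exact le_max_right _ _) hn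
    exact le_trans (pick_spec K hcu (Mf k)) (countLe_mono K h1)
  set f := Stmt3Aux.f Mf with hfdef
  have hfn_lb : ∀ n : ℕ, Mf 2 ≤ n → (2:ℝ) ≤ f (n:ℝ) := by
    intro n hn
    have h1 := hG.f_lbM 2
    have h2 : (Nat.cast (Mf 2) : ℝ) ≤ (n:ℝ) := by exact_mod_cast hn
    have h3 := hG.f_mono h2
    push_cast at h1
    linarith
  refine ⟨f, ⟨fun x hx => hG.f_nonneg hx, fun x hx => ?_,
      fun x y hx hy => hG.f_subadd hx hy, hG.f_mono.monotoneOn _, ?_⟩, ?_, ?_, ?_, ?_⟩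
  · constructor
    · intro h0
      by_contra hne
      have hxpos : 0 < x := lt_of_le_of_ne hx (Ne.symm hne)
      exact absurd h0 (ne_of_gt (hG.f_pos hxpos))
    · rintro rfl
      exact hG.f_zero
  · -- continuity
    have hlip : LipschitzWith 1 f := by
      apply LipschitzWith.of_dist_le_mul
      intro x y
      rw [Real.dist_eq, Real.dist_eq]
      have h1 := hG.f_lip x y
      have h2 := hG.f_lip y x
      rw [abs_sub_comm y x] at h2
      rw [abs_le]
      constructor
      · simp only [NNReal.coe_one, one_mul]; linarith
      · simp only [NNReal.coe_one, one_mul]; linarith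
    exact hlip.continuous.continuousOn
  · -- unbounded
    intro B
    refine ⟨(Nat.cast (Mf (⌈B⌉₊+1)) : ℝ), Nat.cast_nonneg _, ?_⟩
    have h1 := hG.f_lbM (⌈B⌉₊+1)
    have hB : B ≤ (⌈B⌉₊ : ℝ) := Nat.le_ceil B
    push_cast at h1
    linarith
  · exact hG.f_concave.subset (Set.subset_univ _) (convex_Ici 0)
  · exact fun a ha => hG.f_slow a ha
  · -- density
    have hfn : Tendsto (fun n : ℕ => f (n:ℝ)) atTop atTop :=
      hG.f_tendsto.comp tendsto_natCast_atTop_atTop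
    have hc1 : Tendsto (fun _ : ℕ => (1:ℝ)) atTop (nhds 1) := tendsto_const_nhds
    have hd2 : Tendsto (fun n : ℕ => 2 / f (n:ℝ)) atTop (nhds 0) :=
      Tendsto.div_atTop tendsto_const_nhds hfn
    have hd1 : Tendsto (fun n : ℕ => 1 / f (n:ℝ)) atTop (nhds 0) :=
      Tendsto.div_atTop tendsto_const_nhds hfn
    have hlow : Tendsto (fun n : ℕ => 1 - 2 / f (n:ℝ)) atTop (nhds 1) := by
      simpa using hc1.sub hd2
    have hup : Tendsto (fun n : ℕ => 1 + 1 / f (n:ℝ)) atTop (nhds 1) := by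
      simpa using hc1.add hd1
    apply tendsto_of_tendsto_of_tendsto_of_le_of_le' hlow hup
    · filter_upwards [eventually_ge_atTop (Mf 2)] with n hn
      obtain ⟨j, hj1, hj2⟩ := hG.floorM (n:ℝ) (Nat.cast_nonneg n)
      have hjge : 2 ≤ j := by
        by_contra hc
        push_neg at hc
        have h1 : Mf (j+1) ≤ Mf 2 := hG.mono.monotone hc
        have h2 : (Nat.cast (Mf (j+1)) : ℝ) ≤ (Nat.cast (Mf 2) : ℝ) := by exact_mod_cast h1
        have h3 : (Nat.cast (Mf 2) : ℝ) ≤ (n:ℝ) := by exact_mod_cast hn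
        linarith
      obtain ⟨i, rfl⟩ : ∃ i, j = i + 2 := ⟨j - 2, by omega⟩
      have hMn : Mf (i+2) ≤ n := by exact_mod_cast hj1
      have hcn : Mf (i+1) ≤ countLe K n := hMc (i+1) n hMn
      have h2 : ((i:ℝ)+1) ≤ f (countLe K n : ℝ) := by
        have ha' := hG.f_lbM (i+1)
        have hm := hG.f_mono (show (Nat.cast (Mf (i+1)) : ℝ) ≤ ((countLe K n : ℕ):ℝ) by
          exact_mod_cast hcn)
        push_cast at ha'
        linarith
      have h3 : f (n:ℝ) ≤ (i:ℝ) + 3 := by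
        have hb' := hG.f_ub (i+2) hj2.le
        push_cast at hb'
        linarith
      have hfpos : (0:ℝ) < f (n:ℝ) := lt_of_lt_of_le two_pos (hfn_lb n hn)
      rw [le_div_iff₀ hfpos]
      have he : (1 - 2 / f (n:ℝ)) * f (n:ℝ) = f (n:ℝ) - 2 := by field_simp
      rw [he]
      linarith
    · filter_upwards [eventually_ge_atTop (Mf 2)] with n hn
      have hcle : countLe K n ≤ n + 1 := countLe_le K n
      have hmle : f ((countLe K n : ℕ):ℝ) ≤ f ((n:ℝ)+1) := by
        apply hG.f_mono
        have : ((countLe K n : ℕ):ℝ) ≤ ((n+1 : ℕ):ℝ) := by exact_mod_cast hcle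
        push_cast at this
        linarith
      have hlip := hG.f_lip ((n:ℝ)+1) (n:ℝ)
      have habs : |(n:ℝ)+1 - n| = 1 := by simp
      rw [habs] at hlip
      have hfpos : (0:ℝ) < f (n:ℝ) := lt_of_lt_of_le two_pos (hfn_lb n hn)
      rw [div_le_iff₀ hfpos]
      have he : (1 + 1 / f (n:ℝ)) * f (n:ℝ) = f (n:ℝ) + 1 := by field_simp
      rw [he]
      linarith
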